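/- A finite cycle set is non-degenerate: the map S × S → S × S given by (s,t) ↦ (s*t, t*s) is bijective. -/

import Mathlib

open Multiset

namespace CycleSetAux

variable {S : Type*}

/-- step function for folding: add one generator. -/
def step (σ : S → Equiv.Perm S) : S → Equiv.Perm S → Equiv.Perm S :=
  fun x ρ => σ (ρ x) * ρ

theorem step_comm (σ : S → Equiv.Perm S)
    (hc : ∀ s t : S, σ (σ s t) * σ s = σ (σ t s) * σ t) :
    ∀ (a b : S) (ρ : Equiv.Perm S), step σ a (step σ b ρ) = step σ b (step σ a ρ) := by
  intro a b ρ
  simp only [step, Equiv.Perm.mul_apply]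
  rw [← mul_assoc, ← mul_assoc, hc (ρ b) (ρ a)]

variable (σ : S → Equiv.Perm S) (hc : ∀ s t : S, σ (σ s t) * σ s = σ (σ t s) * σ t)

/-- the permutation attached to a multiset. -/
def piM (s : Multiset S) : Equiv.Perm S :=
  @Multiset.foldr S _ (step σ) ⟨step_comm σ hc⟩ 1 s

@[simp] theorem piM_zero : piM σ hc 0 = 1 := rfl

@[simp] theorem piM_cons (x : S) (s : Multiset S) :
    piM σ hc (x ::ₘ s) = σ (piM σ hc s x) * piM σ hc s :=
  @Multiset.foldr_cons S _ (step σ) ⟨step_comm σ hc⟩ 1 x s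

@[simp] theorem piM_singleton (x : S) : piM σ hc {x} = σ x := by
  have : ({x} : Multiset S) = x ::ₘ 0 := rfl
  rw [this, piM_cons]; simp

theorem piM_add (s t : Multiset S) :
    piM σ hc (s + t) = piM σ hc (map (piM σ hc s) t) * piM σ hc s := by
  induction t using Multiset.induction_on with
  | empty => simp
  | cons x t ih =>
    rw [Multiset.add_cons, piM_cons, ih, Multiset.map_cons, piM_cons, Equiv.Perm.mul_apply,
      mul_assoc]

/-- the circle (brace) operation on multisets. -/
def circ (a b : Multiset S) : Multiset S := a + map ((piM σ hc a)⁻¹ : Equiv.Perm S) b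

theorem piM_circ (a b : Multiset S) :
    piM σ hc (circ σ hc a b) = piM σ hc b * piM σ hc a := by
  rw [circ, piM_add, Multiset.map_map]
  congr 2
  · rw [show ((piM σ hc a : Equiv.Perm S) : S → S) ∘ ((piM σ hc a)⁻¹ : Equiv.Perm S) = id by
      funext z; simp]
    rw [Multiset.map_id]

theorem circ_assoc (a b c : Multiset S) :
    circ σ hc (circ σ hc a b) c = circ σ hc a (circ σ hc b c) := by
  have h := piM_circ σ hc a b
  simp only [circ] at h ⊢
  simp only [h, mul_inv_rev, add_assoc, Multiset.map_add, Multiset.map_map, Equiv.Perm.coe_mul]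

theorem circ_left_cancel {a b c : Multiset S} (h : circ σ hc a b = circ σ hc a c) : b = c := by
  simp only [circ] at h
  have h2 := add_left_cancel h
  exact Multiset.map_injective (Equiv.injective _) h2

theorem map_perm_univ [Fintype S] (f : Equiv.Perm S) :
    map ⇑f (Finset.univ.val : Multiset S) = Finset.univ.val := by
  have h : (Finset.univ.map f.toEmbedding) = Finset.univ := Finset.map_univ_equiv f
  calc map ⇑f Finset.univ.val = (Finset.univ.map f.toEmbedding).val := rfl
    _ = Finset.univ.val := by rw [h]

theorem piM_nsmul_univ [Fintype S] (n : ℕ) :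
    piM σ hc (n • (Finset.univ.val : Multiset S)) = (piM σ hc Finset.univ.val) ^ n := by
  induction n with
  | zero => simp
  | succ n ih =>
    rw [succ_nsmul, piM_add, map_perm_univ, ih, ← pow_succ']

end CycleSetAux

open CycleSetAux

/-- A finite cycle set is non-degenerate: `(s,t) ↦ (s*t, t*s)` is a bijection of `S × S`. -/
theorem cycleSet_nondegenerate {S : Type*} [Fintype S] (op : S → S → S)
    (hbij : ∀ s : S, Function.Bijective (op s))
    (hcs : ∀ s t u : S, op (op s t) (op s u) = op (op t s) (op t u)) :
    Function.Bijective (fun p : S × S => (op p.1 p.2, op p.2 p.1)) := by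
  classical
  let σ : S → Equiv.Perm S := fun s => Equiv.ofBijective (op s) (hbij s)
  have hσapp : ∀ a b : S, σ a b = op a b := fun a b => rfl
  have hc : ∀ s t : S, σ (σ s t) * σ s = σ (σ t s) * σ t := by
    refine fun s t => Equiv.ext fun u => ?_
    simp only [Equiv.Perm.mul_apply, hσapp]
    exact hcs s t u
  -- injectivity of the squaring map
  have Qinj : ∀ x y : S, op x x = op y y → x = y := by
    intro x y hxy
    set t0 : Multiset S := Finset.univ.val with ht0
    set K := orderOf (piM σ hc t0) with hKdef
    set m : Multiset S := K • t0 with hm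
    have hπm : piM σ hc m = 1 := by
      rw [hm, piM_nsmul_univ]; exact pow_orderOf_eq_one _
    have hmem : ∀ z : S, z ∈ m := by
      intro z
      rw [hm, Multiset.mem_nsmul]
      exact ⟨(orderOf_pos _).ne', Finset.mem_univ z⟩
    have hmapm : ∀ f : Equiv.Perm S, Multiset.map ⇑f m = m := by
      intro f
      rw [hm, Multiset.map_nsmul, map_perm_univ]
    have key : ∀ z : S, circ σ hc {z} (m - {op z z}) = m := by
      intro z
      have hsub : m - {op z z} + {op z z} = m :=
        tsub_add_cancel_of_le (Multiset.singleton_le.mpr (hmem _))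
      have hz : (⇑(σ z)⁻¹ : S → S) (op z z) = z := by
        have : op z z = σ z z := rfl
        rw [this]
        exact Equiv.symm_apply_apply (σ z) z
      have h2 : Multiset.map ⇑(σ z)⁻¹ (m - {op z z}) + {z} = m := by
        have h3 := congrArg (Multiset.map ⇑(σ z)⁻¹) hsub
        rwa [Multiset.map_add, Multiset.map_singleton, hz, hmapm] at h3
      rw [circ, piM_singleton, add_comm]
      exact h2
    have hx := key x
    have hy := key y
    rw [← hxy] at hy
    set c : Multiset S := m - {op x x} with hcdef
    have hcirc_m_left : ∀ a : Multiset S, circ σ hc m a = m + a := by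
      intro a; rw [circ, hπm]; simp
    have hcirc_m_right : ∀ a : Multiset S, circ σ hc a m = a + m := by
      intro a; rw [circ, hmapm]
    have h5 : ∀ z : S, circ σ hc {z} c = m → circ σ hc c {z} = m := by
      intro z hz
      apply circ_left_cancel σ hc (a := ({z} : Multiset S))
      rw [← circ_assoc, hz, hcirc_m_left, hcirc_m_right, add_comm]
    have h6 : ({x} : Multiset S) = {y} :=
      circ_left_cancel σ hc ((h5 x hx).trans (h5 y hy).symm)
    exact Multiset.singleton_inj.mp h6
  -- now the pair map is injective, hence bijective
  rw [← Finite.injective_iff_bijective]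
  rintro ⟨s, t⟩ ⟨s', t'⟩ h
  simp only [Prod.mk.injEq] at h
  obtain ⟨h1, h2⟩ := h
  have et : t = t' := by
    apply Qinj
    have e1 : op (op s t) (op s t) = op (op t s) (op t t) := hcs s t t
    have e1' : op (op s' t') (op s' t') = op (op t' s') (op t' t') := hcs s' t' t'
    rw [h1, h2] at e1
    exact (hbij (op t' s')).1 (e1.symm.trans e1')
  have es : s = s' := by
    apply Qinj
    have e1 : op (op t s) (op t s) = op (op s t) (op s s) := hcs t s s
    have e1' : op (op t' s') (op t' s') = op (op s' t') (op s' s') := hcs t' s' s'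
    rw [h1, h2] at e1
    exact (hbij (op s' t')).1 (e1.symm.trans e1')
  rw [es, et]
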